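/- Let μ* be a global minimizer of F over ℝ^m, and define Δ* = min_{i∈[n]} [ h_i(μ*) − max_{j∈({0,1,…,m})∖𝒥_i(μ*)} (log v_{ij} − μ*_j) ], with the convention that the inner max over the empty set is −∞. If 0 < r < Δ*/4 and μ ∈ ℝ^m satisfies ‖μ − μ*‖₂ ≤ r, then for every i ∈ [n]: 𝒥_i(μ*) = { j ∈ {0,1,…,m} : log v_{ij} − μ_j ≥ h_i(μ) − 2r }. -/
import Mathlib


open scoped Classical

noncomputable section

/-- Extended valuation vector of buyer `i`: index `0` gets value `1` (the convention
`v_{i0} = 1`), index `j+1` gets `v i j`. -/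
def extV {n m : ℕ} (v : Fin n → Fin m → ℝ) (i : Fin n) : Fin (m + 1) → ℝ :=
  Fin.cons 1 (v i)

/-- Extended log-price vector: index `0` gets `0` (the convention `μ₀ = 0`),
index `j+1` gets `μ j`. -/
def extMu {m : ℕ} (μ : Fin m → ℝ) : Fin (m + 1) → ℝ :=
  Fin.cons 0 μ

/-- The smoothed weight `exp((log v_{ij} − μ_j)/δ) = v_{ij}^{1/δ} · exp(−μ_j/δ)`,
with the conventions `log 0 = −∞`, `exp (−∞) = 0` (via `0 ^ (1/δ) = 0` for `δ > 0`). -/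
def wt {n m : ℕ} (v : Fin n → Fin m → ℝ) (δ : ℝ) (μ : Fin m → ℝ) (i : Fin n)
    (j : Fin (m + 1)) : ℝ :=
  extV v i j ^ (1 / δ) * Real.exp (-extMu μ j / δ)

/-- The smoothed objective `F_δ`. -/
def Fd {n m : ℕ} (B : Fin n → ℝ) (v : Fin n → Fin m → ℝ) (δ : ℝ) (μ : Fin m → ℝ) : ℝ :=
  (∑ j, Real.exp (μ j)) + δ * ∑ i, B i * Real.log (∑ j, wt v δ μ i j)

/-- The gradient of the smoothed objective `F_δ`. -/
def gradFd {n m : ℕ} (B : Fin n → ℝ) (v : Fin n → Fin m → ℝ) (δ : ℝ) (μ : Fin m → ℝ)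
    (j : Fin m) : ℝ :=
  Real.exp (μ j) - ∑ i, B i * (wt v δ μ i j.succ / ∑ j', wt v δ μ i j')

/-- The value `v_{ij} · exp(−μ_j)` (over extended indices), whose logarithm is
`log v_{ij} − μ_j` with the convention `log 0 = −∞`. -/
def valF {n m : ℕ} (v : Fin n → Fin m → ℝ) (μ : Fin m → ℝ) (i : Fin n) (j : Fin (m + 1)) : ℝ :=
  extV v i j * Real.exp (-extMu μ j)

/-- `h_i(μ) = max_{j ∈ {0,…,m}} (log v_{ij} − μ_j)`, realized as the logarithm of the
(positive) maximum of the values `v_{ij} e^{−μ_j}`. -/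
def hMax {n m : ℕ} (v : Fin n → Fin m → ℝ) (μ : Fin m → ℝ) (i : Fin n) : ℝ :=
  Real.log (Finset.univ.sup' Finset.univ_nonempty (valF v μ i))

/-- The nonsmooth objective `F`. -/
def Fobj {n m : ℕ} (B : Fin n → ℝ) (v : Fin n → Fin m → ℝ) (μ : Fin m → ℝ) : ℝ :=
  (∑ j, Real.exp (μ j)) + ∑ i, B i * hMax v μ i

/-- The active index set `𝒥_i(μ) = {j ∈ {0,…,m} : log v_{ij} − μ_j = h_i(μ)}`. -/
def activeSet {n m : ℕ} (v : Fin n → Fin m → ℝ) (μ : Fin m → ℝ) (i : Fin n) :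
    Finset (Fin (m + 1)) :=
  Finset.univ.filter fun j =>
    valF v μ i j = Finset.univ.sup' Finset.univ_nonempty (valF v μ i)

/-- The Euclidean norm on `ℝ^m`. -/
def enorm2 {m : ℕ} (x : Fin m → ℝ) : ℝ :=
  Real.sqrt (∑ j, x j ^ 2)

end

/-- recovery of the active sets from a nearby point.  The hypothesis
`hgap` says `4r < Δ_i(μ*)` for every buyer `i` (in exponential form, so the convention
`log 0 = −∞` is respected and `j` with `v_{ij} = 0` are handled correctly); it encodes
`0 < r < Δ*/4`.  The conclusion identifies `𝒥_i(μ*)` with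
`{j : log v_{ij} − μ_j ≥ h_i(μ) − 2r}` (again stated in exponential form). -/
theorem active_set_recovery
    (n m : ℕ) (hn : 1 ≤ n) (hm : 1 ≤ m)
    (B : Fin n → ℝ) (hB : ∀ i, 0 < B i)
    (v : Fin n → Fin m → ℝ) (hv : ∀ i j, 0 ≤ v i j)
    (μs : Fin m → ℝ) (hμs : ∀ ν : Fin m → ℝ, Fobj B v μs ≤ Fobj B v ν)
    (r : ℝ) (hr : 0 < r)
    (hgap : ∀ i : Fin n, ∀ j ∉ activeSet v μs i,
      valF v μs i j < Real.exp (hMax v μs i - 4 * r))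
    (μ : Fin m → ℝ) (hμ : enorm2 (fun j => μ j - μs j) ≤ r) :
    ∀ i : Fin n, activeSet v μs i =
      Finset.univ.filter (fun j => Real.exp (hMax v μ i - 2 * r) ≤ valF v μ i j) := by
  intro i
  have hvnn : ∀ j : Fin (m+1), 0 ≤ extV v i j := by
    intro j
    refine Fin.cases ?_ ?_ j
    · simp [extV]
    · intro k; simpa [extV] using hv i k
  have hcoord : ∀ j : Fin (m+1), |extMu μ j - extMu μs j| ≤ r := by
    intro j
    refine Fin.cases ?_ ?_ j
    · simpa [extMu] using hr.le
    · intro k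
      simp only [extMu, Fin.cons_succ]
      have h2 : (μ k - μs k)^2 ≤ ∑ j, (μ j - μs j)^2 :=
        Finset.single_le_sum (f := fun j => (μ j - μs j)^2)
          (fun j _ => sq_nonneg _) (Finset.mem_univ k)
      calc |μ k - μs k| = Real.sqrt ((μ k - μs k)^2) := (Real.sqrt_sq_eq_abs _).symm
        _ ≤ Real.sqrt (∑ j, (μ j - μs j)^2) := Real.sqrt_le_sqrt h2
        _ ≤ r := hμ
  have key : ∀ (a b : Fin m → ℝ), (∀ j : Fin (m+1), extMu b j - extMu a j ≤ r) →
      ∀ j, valF v a i j ≤ valF v b i j * Real.exp r := by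
    intro a b hab j
    have hexp : Real.exp (-extMu a j) ≤ Real.exp (-extMu b j) * Real.exp r := by
      rw [← Real.exp_add]
      exact Real.exp_le_exp.mpr (by linarith [hab j])
    calc valF v a i j = extV v i j * Real.exp (-extMu a j) := rfl
      _ ≤ extV v i j * (Real.exp (-extMu b j) * Real.exp r) :=
        mul_le_mul_of_nonneg_left hexp (hvnn j)
      _ = valF v b i j * Real.exp r := by rw [valF]; ring
  set M := Finset.univ.sup' Finset.univ_nonempty (valF v μ i) with hMdef
  set Ms := Finset.univ.sup' Finset.univ_nonempty (valF v μs i) with hMsdef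
  have hone : ∀ ν : Fin m → ℝ, valF v ν i 0 = 1 := by
    intro ν; simp [valF, extV, extMu]
  have hMpos : 0 < M := lt_of_lt_of_le one_pos
    ((hone μ) ▸ Finset.le_sup' (valF v μ i) (Finset.mem_univ 0))
  have hMspos : 0 < Ms := lt_of_lt_of_le one_pos
    ((hone μs) ▸ Finset.le_sup' (valF v μs i) (Finset.mem_univ 0))
  have h1 : ∀ j, valF v μs i j ≤ valF v μ i j * Real.exp r :=
    key μs μ (fun j => by linarith [(abs_le.mp (hcoord j)).2])
  have h2 : ∀ j, valF v μ i j ≤ valF v μs i j * Real.exp r :=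
    key μ μs (fun j => by linarith [(abs_le.mp (hcoord j)).1])
  have hMsub : ∀ j, valF v μ i j ≤ M := fun j => Finset.le_sup' _ (Finset.mem_univ j)
  have hMssub : ∀ j, valF v μs i j ≤ Ms := fun j => Finset.le_sup' _ (Finset.mem_univ j)
  have hMsle : Ms ≤ M * Real.exp r := by
    rw [hMsdef]
    exact Finset.sup'_le _ _ fun j _ =>
      le_trans (h1 j) (mul_le_mul_of_nonneg_right (hMsub j) (Real.exp_pos r).le)
  have hMle : M ≤ Ms * Real.exp r := by
    rw [hMdef]
    exact Finset.sup'_le _ _ fun j _ =>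
      le_trans (h2 j) (mul_le_mul_of_nonneg_right (hMssub j) (Real.exp_pos r).le)
  have hhM : Real.exp (hMax v μ i) = M := by
    rw [hMax]; exact Real.exp_log hMpos
  have hhMs : Real.exp (hMax v μs i) = Ms := by
    rw [hMax]; exact Real.exp_log hMspos
  have hepos : (0:ℝ) < Real.exp r := Real.exp_pos r
  have he2 : Real.exp (2 * r) = Real.exp r * Real.exp r := by
    rw [← Real.exp_add]; ring_nf
  have he4 : Real.exp (4 * r) = Real.exp (2 * r) * Real.exp (2 * r) := by
    rw [← Real.exp_add]; ring_nf
  have hgoal2 : Real.exp (hMax v μ i - 2 * r) = M / Real.exp (2 * r) := by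
    rw [Real.exp_sub, hhM]
  have hgaps : Real.exp (hMax v μs i - 4 * r) = Ms / Real.exp (4 * r) := by
    rw [Real.exp_sub, hhMs]
  ext j
  simp only [activeSet, Finset.mem_filter, Finset.mem_univ, true_and]
  constructor
  · intro hj
    rw [hgoal2, div_le_iff₀ (Real.exp_pos _)]
    have hA : Ms ≤ valF v μ i j * Real.exp r := by
      rw [hMsdef, ← hj]; exact h1 j
    calc M ≤ Ms * Real.exp r := hMle
      _ ≤ valF v μ i j * Real.exp r * Real.exp r :=
        mul_le_mul_of_nonneg_right hA hepos.le
      _ = valF v μ i j * Real.exp (2 * r) := by rw [he2]; ring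
  · intro hj
    by_contra hna
    have hjna : j ∉ activeSet v μs i := by
      simp [activeSet, hMsdef] at hna ⊢
      rw [← hMsdef]; exact hna
    have hlt : valF v μs i j < Ms / Real.exp (4 * r) := hgaps ▸ hgap i j hjna
    have hmu : valF v μ i j < Ms / Real.exp (4 * r) * Real.exp r := by
      calc valF v μ i j ≤ valF v μs i j * Real.exp r := h2 j
        _ < Ms / Real.exp (4 * r) * Real.exp r :=
          mul_lt_mul_of_pos_right hlt hepos
    have hMb : Ms / Real.exp (4 * r) * Real.exp r ≤ M / Real.exp (2 * r) := by
      rw [div_mul_eq_mul_div, div_le_div_iff₀ (Real.exp_pos _) (Real.exp_pos _)]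
      have : Ms * Real.exp r * Real.exp (2 * r) ≤ M * Real.exp r * Real.exp r * Real.exp (2*r) := by
        nlinarith [mul_le_mul_of_nonneg_right hMsle hepos.le, Real.exp_pos (2*r)]
      calc Ms * Real.exp r * Real.exp (2 * r) ≤ M * Real.exp r * Real.exp r * Real.exp (2*r) := this
        _ = M * Real.exp (4 * r) := by rw [he4, he2]; ring
    rw [hgoal2] at hj
    linarith
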